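/- For n ≥ 1, let K_n be the n×n real symmetric matrix indexed by {0,…,n−1} with (K_n)(i, i+1) = (K_n)(i+1, i) = √((i+1)(n−1−i)) for 0 ≤ i ≤ n−2 and all other entries 0. Then the characteristic polynomial of K_n equals ∏_{j=0}^{n−1} (X − (2j − (n−1))); equivalently, the eigenvalues of K_n are exactly −(n−1), −(n−3), …, n−3, n−1, each simple. -/

import Mathlib

open Matrix Polynomial

/-- The Kac matrix: adjacency matrix of the hypercubically weighted path graph `P̃_n`,
with `K(i, i+1) = K(i+1, i) = √((i+1)(n−1−i))` (0-based indices) and all other entries 0. -/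
noncomputable def kacMatrix (n : ℕ) : Matrix (Fin n) (Fin n) ℝ :=
  Matrix.of fun i j =>
    if (i : ℕ) + 1 = (j : ℕ) then
      Real.sqrt ((((i : ℕ) : ℝ) + 1) * ((n : ℝ) - 1 - ((i : ℕ) : ℝ)))
    else if (j : ℕ) + 1 = (i : ℕ) then
      Real.sqrt ((((j : ℕ) : ℝ) + 1) * ((n : ℝ) - 1 - ((j : ℕ) : ℝ)))
    else 0


lemma sum_ite_nat (n : ℕ) (t : ℕ) (g : Fin n → ℝ) :
    (∑ k : Fin n, if t = (k:ℕ) then g k else 0)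
      = if h : t < n then g ⟨t, h⟩ else 0 := by
  split
  · rename_i h
    rw [Finset.sum_eq_single_of_mem (⟨t, h⟩ : Fin n) (Finset.mem_univ _)]
    · simp
    · intro c _ hc
      rw [if_neg]
      intro he
      exact hc (Fin.ext (by simpa using he.symm))
  · rename_i h
    exact Finset.sum_eq_zero fun k _ => if_neg (by omega)

lemma kac_split (n : ℕ) (i k : Fin n) (V : ℕ → ℝ) :
    kacMatrix n i k * V k
    = (if (i:ℕ)+1 = (k:ℕ) then
        Real.sqrt ((((i:ℕ):ℝ)+1) * ((n:ℝ)-1-((i:ℕ):ℝ))) * V k else 0)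
      + (if (k:ℕ)+1 = (i:ℕ) then
        Real.sqrt ((((k:ℕ):ℝ)+1) * ((n:ℝ)-1-((k:ℕ):ℝ))) * V k else 0) := by
  by_cases h1 : (i:ℕ)+1 = (k:ℕ) <;> by_cases h2 : (k:ℕ)+1 = (i:ℕ) <;>
    simp [kacMatrix, h1, h2] <;> omega

lemma D1 (a : ℕ) : (1 - X^2 : ℝ[X]) * derivative ((1 - X)^a) =
    -(C (a:ℝ) * ((1 + X) * (1 - X)^a)) := by
  cases a with
  | zero => simp
  | succ m =>
    rw [derivative_pow]
    simp only [derivative_sub, derivative_one, derivative_X, zero_sub, Nat.add_sub_cancel,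
      Nat.cast_succ, map_add, Polynomial.C_1, pow_succ]
    ring

lemma D2 (b : ℕ) : (1 - X^2 : ℝ[X]) * derivative ((1 + X)^b) =
    C (b:ℝ) * ((1 - X) * (1 + X)^b) := by
  cases b with
  | zero => simp
  | succ m =>
    rw [derivative_pow]
    simp only [derivative_add, derivative_one, derivative_X, zero_add, Nat.add_sub_cancel,
      Nat.cast_succ, map_add, Polynomial.C_1, pow_succ]
    ring

lemma mainID (a b : ℕ) :
    (1 - X^2 : ℝ[X]) * derivative ((1 - X)^a * (1 + X)^b)
      + (C (a:ℝ) + C (b:ℝ)) * (X * ((1 - X)^a * (1 + X)^b))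
    = (C (b:ℝ) - C (a:ℝ)) * ((1 - X)^a * (1 + X)^b) := by
  rw [derivative_mul]
  linear_combination (1 + X : ℝ[X])^b * D1 a + (1 - X : ℝ[X])^a * D2 b

lemma coeffX2D (g : ℝ[X]) (m : ℕ) :
    (X^2 * derivative g).coeff (m+1) = m * g.coeff m := by
  rw [coeff_X_pow_mul']
  cases m with
  | zero => simp
  | succ k =>
    simp only [show k + 1 + 1 - 2 = k by omega, if_pos (by omega : 2 ≤ k + 1 + 1),
      coeff_derivative]
    push_cast; ring

lemma REC (a b : ℕ) (m : ℕ) :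
    ((m:ℝ)+2) * ((1 - X : ℝ[X])^a * (1 + X)^b).coeff (m+2)
      + (((a:ℝ)+(b:ℝ)) - m) * ((1 - X : ℝ[X])^a * (1 + X)^b).coeff m
    = ((b:ℝ)-(a:ℝ)) * ((1 - X : ℝ[X])^a * (1 + X)^b).coeff (m+1) := by
  have h := congrArg (fun p : ℝ[X] => p.coeff (m+1)) (mainID a b)
  set g : ℝ[X] := (1 - X)^a * (1 + X)^b with hg
  simp only [sub_mul, one_mul, coeff_add, coeff_sub, coeffX2D, coeff_derivative,
    ← C_add, ← C_sub, coeff_C_mul, coeff_X_mul] at h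
  push_cast at h ⊢
  linear_combination h

lemma REC0 (a b : ℕ) :
    ((1 - X : ℝ[X])^a * (1 + X)^b).coeff 1
    = ((b:ℝ)-(a:ℝ)) * ((1 - X : ℝ[X])^a * (1 + X)^b).coeff 0 := by
  have h := congrArg (fun p : ℝ[X] => p.coeff 0) (mainID a b)
  set g : ℝ[X] := (1 - X)^a * (1 + X)^b with hg
  simp only [sub_mul, one_mul, coeff_add, coeff_sub, coeff_derivative,
    ← C_add, ← C_sub, coeff_C_mul, mul_coeff_zero, coeff_X_zero, zero_mul, mul_zero,
    sub_zero, add_zero] at h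
  simp only [coeff_X_pow] at h
  norm_num at h
  linear_combination h

lemma deg_le (a b : ℕ) : ((1 - X : ℝ[X])^a * (1 + X)^b).natDegree ≤ a + b := by
  have h1 : (1 - X : ℝ[X]).natDegree ≤ 1 := by
    have : (1 - X : ℝ[X]) = -(X - C 1) := by rw [Polynomial.C_1]; ring
    rw [this, natDegree_neg, natDegree_X_sub_C]
  have h2 : (1 + X : ℝ[X]).natDegree ≤ 1 := by
    have : (1 + X : ℝ[X]) = X - C (-1) := by rw [map_neg, Polynomial.C_1]; ring
    rw [this, natDegree_X_sub_C]
  refine (natDegree_mul_le).trans (add_le_add ?_ ?_) <;>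
    refine natDegree_pow_le.trans ?_
  · calc a * (1 - X : ℝ[X]).natDegree ≤ a * 1 := Nat.mul_le_mul_left a h1
      _ = a := Nat.mul_one a
  · calc b * (1 + X : ℝ[X]).natDegree ≤ b * 1 := Nat.mul_le_mul_left b h2
      _ = b := Nat.mul_one b

lemma coeff_zero_one (a b : ℕ) : ((1 - X : ℝ[X])^a * (1 + X)^b).coeff 0 = 1 := by
  rw [coeff_zero_eq_eval_zero]
  simp

section sqrtlems
variable (n : ℕ) (u : ℕ → ℝ)

lemma UP (hn : 1 ≤ n) (hu : ∀ m, n - 1 < m → u m = 0) (m : ℕ) :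
    Real.sqrt (((m:ℝ)+1) * ((n:ℝ)-1-m)) * (u (m+1) / Real.sqrt ((n-1).choose (m+1) : ℝ))
      * Real.sqrt ((n-1).choose m : ℝ)
    = ((m:ℝ)+1) * u (m+1) := by
  by_cases hm : m + 1 ≤ n - 1
  · have hc2 : 0 < ((n-1).choose (m+1) : ℝ) := by
      exact_mod_cast Nat.choose_pos hm
    have hch : ((n:ℝ)-1-(m:ℝ)) * ((n-1).choose m : ℝ) = ((m:ℝ)+1) * ((n-1).choose (m+1) : ℝ) := by
      have h := Nat.choose_succ_right_eq (n-1) m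
      have h2 : ((n - 1 - m : ℕ) : ℝ) = (n:ℝ) - 1 - m := by
        rw [Nat.cast_sub (by omega), Nat.cast_sub hn]; push_cast; ring
      have := congrArg (fun x : ℕ => (x : ℝ)) h
      push_cast at this
      rw [h2] at this
      linarith
    have hA : (0:ℝ) ≤ ((m:ℝ)+1) * ((n:ℝ)-1-m) := by
      have : (m:ℝ) + 2 ≤ n := by exact_mod_cast (by omega : m + 2 ≤ n)
      nlinarith
    have key : (((m:ℝ)+1) * ((n:ℝ)-1-m)) * ((n-1).choose m : ℝ)
        = ((m:ℝ)+1)^2 * ((n-1).choose (m+1) : ℝ) := by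
      linear_combination ((m:ℝ)+1) * hch
    have hs : Real.sqrt ((n-1).choose (m+1) : ℝ) ≠ 0 := by
      exact ne_of_gt (Real.sqrt_pos.mpr hc2)
    have hsq : Real.sqrt (((m:ℝ)+1) * ((n:ℝ)-1-m)) * Real.sqrt ((n-1).choose m : ℝ)
        = ((m:ℝ)+1) * Real.sqrt ((n-1).choose (m+1) : ℝ) := by
      rw [← Real.sqrt_mul hA, key, Real.sqrt_mul (sq_nonneg _),
        Real.sqrt_sq (by positivity)]
    calc Real.sqrt (((m:ℝ)+1) * ((n:ℝ)-1-m)) * (u (m+1) / Real.sqrt ((n-1).choose (m+1) : ℝ))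
          * Real.sqrt ((n-1).choose m : ℝ)
        = u (m+1) / Real.sqrt ((n-1).choose (m+1) : ℝ)
            * (Real.sqrt (((m:ℝ)+1) * ((n:ℝ)-1-m)) * Real.sqrt ((n-1).choose m : ℝ)) := by ring
      _ = u (m+1) / Real.sqrt ((n-1).choose (m+1) : ℝ)
            * (((m:ℝ)+1) * Real.sqrt ((n-1).choose (m+1) : ℝ)) := by rw [hsq]
      _ = ((m:ℝ)+1) * u (m+1) := by field_simp
  · have h0 : u (m+1) = 0 := hu _ (by omega)
    simp [h0]

lemma DOWN (hn : 1 ≤ n) (hu : ∀ m, n - 1 < m → u m = 0) (m : ℕ) :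
    Real.sqrt (((m:ℝ)+1) * ((n:ℝ)-1-m)) * (u m / Real.sqrt ((n-1).choose m : ℝ))
      * Real.sqrt ((n-1).choose (m+1) : ℝ)
    = (((n:ℝ)-1-m)) * u m := by
  by_cases hm : m + 1 ≤ n - 1
  · have hc1 : 0 < ((n-1).choose m : ℝ) := by
      exact_mod_cast Nat.choose_pos (by omega)
    have hch : ((n:ℝ)-1-(m:ℝ)) * ((n-1).choose m : ℝ) = ((m:ℝ)+1) * ((n-1).choose (m+1) : ℝ) := by
      have h := Nat.choose_succ_right_eq (n-1) m
      have h2 : ((n - 1 - m : ℕ) : ℝ) = (n:ℝ) - 1 - m := by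
        rw [Nat.cast_sub (by omega), Nat.cast_sub hn]; push_cast; ring
      have := congrArg (fun x : ℕ => (x : ℝ)) h
      push_cast at this
      rw [h2] at this
      linarith
    have hB : (0:ℝ) ≤ (n:ℝ)-1-m := by
      have : (m:ℝ) + 2 ≤ n := by exact_mod_cast (by omega : m + 2 ≤ n)
      linarith
    have hA : (0:ℝ) ≤ ((m:ℝ)+1) * ((n:ℝ)-1-m) := by positivity
    have key : (((m:ℝ)+1) * ((n:ℝ)-1-m)) * ((n-1).choose (m+1) : ℝ)
        = ((n:ℝ)-1-m)^2 * ((n-1).choose m : ℝ) := by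
      linear_combination ((n:ℝ)-1-(m:ℝ)) * hch.symm
    have hs : Real.sqrt ((n-1).choose m : ℝ) ≠ 0 := ne_of_gt (Real.sqrt_pos.mpr hc1)
    have hsq : Real.sqrt (((m:ℝ)+1) * ((n:ℝ)-1-m)) * Real.sqrt ((n-1).choose (m+1) : ℝ)
        = ((n:ℝ)-1-m) * Real.sqrt ((n-1).choose m : ℝ) := by
      rw [← Real.sqrt_mul hA, key, Real.sqrt_mul (sq_nonneg _), Real.sqrt_sq hB]
    calc Real.sqrt (((m:ℝ)+1) * ((n:ℝ)-1-m)) * (u m / Real.sqrt ((n-1).choose m : ℝ))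
          * Real.sqrt ((n-1).choose (m+1) : ℝ)
        = u m / Real.sqrt ((n-1).choose m : ℝ)
            * (Real.sqrt (((m:ℝ)+1) * ((n:ℝ)-1-m)) * Real.sqrt ((n-1).choose (m+1) : ℝ)) := by
          ring
      _ = u m / Real.sqrt ((n-1).choose m : ℝ)
            * (((n:ℝ)-1-m) * Real.sqrt ((n-1).choose m : ℝ)) := by rw [hsq]
      _ = ((n:ℝ)-1-m) * u m := by field_simp
  · rcases Nat.lt_or_ge (n-1) m with hgt | hle
    · simp [hu m hgt]
    · have hm' : m = n - 1 := by omega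
      have : (n:ℝ) - 1 - m = 0 := by
        rw [hm', Nat.cast_sub hn]; push_cast; ring
      rw [this]
      simp

lemma kac_eigen (n j : ℕ) (hn : 1 ≤ n) (hj : j < n) :
    ∃ v : Fin n → ℝ, v ≠ 0 ∧
      (kacMatrix n) *ᵥ v = (((j:ℝ)) - (((n:ℝ) - 1) - (j:ℝ))) • v := by
  set a : ℕ := n - 1 - j with ha
  set b : ℕ := j with hb
  set f : ℝ[X] := (1 - X)^a * (1 + X)^b with hf
  set u : ℕ → ℝ := fun m => f.coeff m with hudef
  have hab : a + b = n - 1 := by omega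
  have hcast : (a:ℝ) = (n:ℝ) - 1 - j := by
    rw [ha, Nat.cast_sub (by omega), Nat.cast_sub hn]; push_cast; ring
  have hdeg : f.natDegree ≤ n - 1 := (deg_le a b).trans_eq hab
  have hu : ∀ m, n - 1 < m → u m = 0 := fun m hm =>
    coeff_eq_zero_of_natDegree_lt (lt_of_le_of_lt hdeg hm)
  set V : ℕ → ℝ := fun m => u m / Real.sqrt ((n-1).choose m : ℝ) with hV
  set lam : ℝ := (j:ℝ) - ((n:ℝ) - 1 - j) with hlam
  have hlam' : lam = (b:ℝ) - (a:ℝ) := by rw [hlam, hcast]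
  refine ⟨fun i => V i, ?_, ?_⟩
  · intro hz
    have h0 := congrFun hz ⟨0, hn⟩
    have hu0 : u 0 = 1 := coeff_zero_one a b
    simp only [hV, Pi.zero_apply, Fin.val_mk, Nat.choose_zero_right, Nat.cast_one,
      Real.sqrt_one, div_one, hu0] at h0
    exact one_ne_zero h0
  · funext i
    obtain ⟨iv, hiv⟩ := i
    simp only [mulVec, dotProduct, Pi.smul_apply, smul_eq_mul, Fin.val_mk]
    have hsum : ∑ k : Fin n, kacMatrix n ⟨iv, hiv⟩ k * V (k:ℕ)
        = (∑ k : Fin n, if iv+1 = (k:ℕ) then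
            Real.sqrt (((iv:ℝ)+1) * ((n:ℝ)-1-(iv:ℝ))) * V (k:ℕ) else 0)
          + (∑ k : Fin n, if (k:ℕ)+1 = iv then
            Real.sqrt ((((k:ℕ):ℝ)+1) * ((n:ℝ)-1-((k:ℕ):ℝ))) * V (k:ℕ) else 0) := by
      rw [← Finset.sum_add_distrib]
      exact Finset.sum_congr rfl fun k _ => kac_split n ⟨iv, hiv⟩ k V
    rw [hsum]
    have hsum1 : (∑ k : Fin n, if iv+1 = (k:ℕ) then
          Real.sqrt (((iv:ℝ)+1) * ((n:ℝ)-1-(iv:ℝ))) * V (k:ℕ) else 0)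
        = Real.sqrt (((iv:ℝ)+1) * ((n:ℝ)-1-(iv:ℝ))) * V (iv+1) := by
      rw [sum_ite_nat]
      split
      · rfl
      · rename_i h
        have hi : iv = n - 1 := by omega
        have : (n:ℝ) - 1 - (iv:ℝ) = 0 := by
          rw [hi, Nat.cast_sub hn]; push_cast; ring
        rw [this, mul_zero, Real.sqrt_zero, zero_mul]
    rw [hsum1]
    have hcpos : (0:ℝ) < ((n-1).choose iv : ℝ) := by
      exact_mod_cast Nat.choose_pos (by omega)
    have hcs : Real.sqrt ((n-1).choose iv : ℝ) ≠ 0 := ne_of_gt (Real.sqrt_pos.mpr hcpos)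
    apply mul_right_cancel₀ hcs
    cases iv with
    | zero =>
      have h2 : (∑ k : Fin n, if (k:ℕ)+1 = 0 then
          Real.sqrt ((((k:ℕ):ℝ)+1) * ((n:ℝ)-1-((k:ℕ):ℝ))) * V (k:ℕ) else 0) = 0 :=
        Finset.sum_eq_zero fun k _ => if_neg (by omega)
      rw [h2, add_zero]
      have hup := UP n u hn hu 0
      have hrec0 : u 1 = ((b:ℝ)-(a:ℝ)) * u 0 := REC0 a b
      simp only [hV]
      rw [hup, mul_assoc, div_mul_cancel₀ _ hcs, hlam', hrec0]
      push_cast; ring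
    | succ m =>
      have h2 : (∑ k : Fin n, if (k:ℕ)+1 = m+1 then
          Real.sqrt ((((k:ℕ):ℝ)+1) * ((n:ℝ)-1-((k:ℕ):ℝ))) * V (k:ℕ) else 0)
          = Real.sqrt (((m:ℝ)+1) * ((n:ℝ)-1-(m:ℝ))) * V m := by
        have hcongr : ∀ k : Fin n, ((k:ℕ)+1 = m+1) = (m = (k:ℕ)) := fun k =>
          propext (by omega)
        simp only [hcongr]
        rw [sum_ite_nat, dif_pos (by omega : m < n)]
      rw [h2, add_mul]
      have hup := UP n u hn hu (m+1)
      have hdown := DOWN n u hn hu m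
      have hrec : ((m:ℝ)+2) * u (m+2) + (((a:ℝ)+(b:ℝ)) - (m:ℝ)) * u m
          = ((b:ℝ)-(a:ℝ)) * u (m+1) := REC a b m
      have habR : (a:ℝ) + (b:ℝ) = (n:ℝ) - 1 := by rw [hcast, hb]; ring
      simp only [hV]
      rw [hup, hdown, mul_assoc, div_mul_cancel₀ _ hcs, hlam']
      rw [habR] at hrec
      push_cast at hrec ⊢
      linarith [hrec]

lemma eval_charpoly' {N : ℕ} (M : Matrix (Fin N) (Fin N) ℝ) (r : ℝ) :
    M.charpoly.eval r = (Matrix.scalar (Fin N) r - M).det := by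
  rw [Matrix.charpoly, _root_.eval_det, matPolyEquiv_charmatrix, eval_sub, eval_X, eval_C]

lemma kac_root (n : ℕ) (hn : 1 ≤ n) (j : ℕ) (hj : j < n) :
    ((kacMatrix n).charpoly).IsRoot (2 * (j:ℝ) - ((n:ℝ) - 1)) := by
  obtain ⟨v, hv, hev⟩ := kac_eigen n j hn hj
  have hlam : (2 * (j:ℝ) - ((n:ℝ) - 1)) = (j:ℝ) - (((n:ℝ) - 1) - (j:ℝ)) := by ring
  rw [IsRoot, eval_charpoly', ← Matrix.exists_mulVec_eq_zero_iff]
  refine ⟨v, hv, ?_⟩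
  rw [Matrix.sub_mulVec, hev, hlam]
  have : (Matrix.scalar (Fin n) ((j:ℝ) - (((n:ℝ) - 1) - (j:ℝ)))) *ᵥ v
      = ((j:ℝ) - (((n:ℝ) - 1) - (j:ℝ))) • v := by
    ext i
    simp [Matrix.scalar, Matrix.mulVec_diagonal]
  rw [this, sub_self]


/-- the characteristic polynomial of the Kac matrix `K_n` is
`∏_{j=0}^{n−1} (X − (2j − (n−1)))`; its eigenvalues are `−(n−1), −(n−3), …, n−1`, all simple. -/
theorem stmt10 (n : ℕ) (hn : 1 ≤ n) :
    (kacMatrix n).charpoly =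
      ∏ j : Fin n, (X - C (2 * ((j : ℕ) : ℝ) - ((n : ℝ) - 1))) := by
  have hPm : (kacMatrix n).charpoly.Monic := Matrix.charpoly_monic _
  have hQm : (∏ j : Fin n, (X - C (2 * ((j:ℕ) : ℝ) - ((n:ℝ) - 1)))).Monic :=
    monic_prod_of_monic _ _ fun _ _ => monic_X_sub_C _
  have hinj : Function.Injective (fun j : Fin n => 2 * ((j:ℕ) : ℝ) - ((n:ℝ) - 1)) := by
    intro x y hxy
    simp only at hxy
    have : ((x:ℕ):ℝ) = ((y:ℕ):ℝ) := by linarith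
    exact Fin.ext (by exact_mod_cast this)
  have hdvd : (∏ j : Fin n, (X - C (2 * ((j:ℕ) : ℝ) - ((n:ℝ) - 1)))) ∣ (kacMatrix n).charpoly := by
    refine Finset.prod_dvd_of_coprime
      ((pairwise_coprime_X_sub_C hinj).set_pairwise _) fun j _ => ?_
    exact dvd_iff_isRoot.mpr (kac_root n hn j j.isLt)
  have hdegP : (kacMatrix n).charpoly.natDegree = n := by
    rw [Matrix.charpoly_natDegree_eq_dim, Fintype.card_fin]
  have hdegQ : (∏ j : Fin n, (X - C (2 * ((j:ℕ) : ℝ) - ((n:ℝ) - 1)))).natDegree = n := by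
    rw [natDegree_prod _ _ fun j _ => X_sub_C_ne_zero _,
      Finset.sum_congr rfl fun (j : Fin n) _ =>
        natDegree_X_sub_C (2 * ((j:ℕ) : ℝ) - ((n:ℝ) - 1))]
    simp
  exact eq_of_monic_of_dvd_of_natDegree_le hQm hPm hdvd (by rw [hdegP, hdegQ])
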